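/- The function f(k_1,...,k_d) = -∑_i k_i·log k_i + ∑_i (k_i+α_i)·log(k_i+α_i) - (k+α)·log(k+α) + k·log k + C (where α = ∑_i α_i and C = -∑_i α_i·log α_i + α·log α collects constants), restricted to the simplex {k_i > 0, ∑_i k_i = k}, attains its unique maximum at k_i* = (k/α)·α_i for each i. -/

import Mathlib

open Real Finset

private lemma tangent_lt (a m x : ℝ) (ha : 0 < a) (hm : 0 < m) (hx : 0 < x)
    (hne : x ≠ m) :
    (x + a) * Real.log (x + a) - x * Real.log x <
      (m + a) * Real.log (m + a) - m * Real.log m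
        + (x - m) * (Real.log (m + a) - Real.log m) := by
  have hs : 0 < x + a := by linarith
  have hT : 0 < m + a := by linarith
  have hne1 : (x + a) * m / (x * (m + a)) ≠ 1 := by
    intro h
    have h' : (x + a) * m = x * (m + a) :=
      (div_eq_one_iff_eq (by positivity)).mp h
    have h2 : a * x = a * m := by linear_combination -h'
    exact hne (mul_left_cancel₀ ha.ne' h2)
  have h1 : Real.log ((x + a) * m / (x * (m + a))) < (x + a) * m / (x * (m + a)) - 1 :=
    Real.log_lt_sub_one_of_pos (by positivity) hne1
  have h2 : Real.log ((x + a) / (m + a)) ≤ (x + a) / (m + a) - 1 :=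
    Real.log_le_sub_one_of_pos (by positivity)
  have e1 : Real.log ((x + a) * m / (x * (m + a)))
      = Real.log (x + a) + Real.log m - Real.log x - Real.log (m + a) := by
    rw [Real.log_div (mul_pos hs hm).ne' (mul_pos hx hT).ne',
      Real.log_mul hs.ne' hm.ne', Real.log_mul hx.ne' hT.ne']
    ring
  have e2 : Real.log ((x + a) / (m + a)) = Real.log (x + a) - Real.log (m + a) :=
    Real.log_div hs.ne' hT.ne'
  rw [e1] at h1
  rw [e2] at h2
  have hx1 := mul_lt_mul_of_pos_left h1 hx
  have ha2 := mul_le_mul_of_nonneg_left h2 ha.le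
  have hzero : x * ((x + a) * m / (x * (m + a)) - 1) + a * ((x + a) / (m + a) - 1) = 0 := by
    field_simp
    ring
  nlinarith [hx1, ha2, hzero]

private lemma tangent_le (a m x : ℝ) (ha : 0 < a) (hm : 0 < m) (hx : 0 < x) :
    (x + a) * Real.log (x + a) - x * Real.log x ≤
      (m + a) * Real.log (m + a) - m * Real.log m
        + (x - m) * (Real.log (m + a) - Real.log m) := by
  rcases eq_or_ne x m with rfl | hne
  · simp
  · exact (tangent_lt a m x ha hm hx hne).le

/-- The Stirling approximation `f` of the Dirichlet–Multinomial log predictive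
posterior attains its unique maximum on the simplex at `k_i* = (k/α) * α_i`. -/
theorem dm_stirling_mode (d : ℕ) (k : ℝ) (α : Fin d → ℝ)
    (hk : 0 < k) (hα : ∀ i, 0 < α i) :
    let A : ℝ := ∑ i, α i
    let C : ℝ := -(∑ i, α i * Real.log (α i)) + A * Real.log A
    let f : (Fin d → ℝ) → ℝ := fun kv =>
      -(∑ i, kv i * Real.log (kv i)) + (∑ i, (kv i + α i) * Real.log (kv i + α i))
        - (k + A) * Real.log (k + A) + k * Real.log k + C
    let m : Fin d → ℝ := fun i => (k / A) * α i
    ∀ kv : Fin d → ℝ, (∀ i, 0 < kv i) → (∑ i, kv i = k) →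
      f kv ≤ f m ∧ (f kv = f m → kv = m) := by
  intro A C f m kv hpos hsum
  have hA : 0 < A := by
    rcases isEmpty_or_nonempty (Fin d) with h | h
    · exfalso
      simp [Finset.univ_eq_empty] at hsum
      linarith
    · exact Finset.sum_pos (fun i _ => hα i) Finset.univ_nonempty
  have hm_pos : ∀ i, 0 < m i := fun i => mul_pos (div_pos hk hA) (hα i)
  have hmsum : ∑ i, m i = k := by
    simp only [m]
    rw [← Finset.mul_sum]
    field_simp
    rfl
  set c : ℝ := Real.log (k + A) - Real.log k with hc
  have hslope : ∀ i, Real.log (m i + α i) - Real.log (m i) = c := by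
    intro i
    have h1 : m i + α i = ((k + A) / A) * α i := by
      simp only [m]; field_simp
    have h2 : Real.log (m i + α i)
        = Real.log (k + A) - Real.log A + Real.log (α i) := by
      rw [h1, Real.log_mul (by positivity) (hα i).ne', Real.log_div (by positivity) hA.ne']
    have h3 : Real.log (m i) = Real.log k - Real.log A + Real.log (α i) := by
      simp only [m]
      rw [Real.log_mul (by positivity) (hα i).ne', Real.log_div hk.ne' hA.ne']
    rw [h2, h3, hc]; ring
  -- per-coordinate bounds
  have hle : ∀ i ∈ Finset.univ,
      (kv i + α i) * Real.log (kv i + α i) - kv i * Real.log (kv i) ≤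
        (m i + α i) * Real.log (m i + α i) - m i * Real.log (m i) + (kv i - m i) * c := by
    intro i _
    have := tangent_le (α i) (m i) (kv i) (hα i) (hm_pos i) (hpos i)
    rwa [hslope i] at this
  have hsum_c : ∑ i, (kv i - m i) * c = 0 := by
    rw [← Finset.sum_mul, Finset.sum_sub_distrib, hsum, hmsum]
    ring
  have hG : ∑ i, ((kv i + α i) * Real.log (kv i + α i) - kv i * Real.log (kv i)) ≤
      ∑ i, ((m i + α i) * Real.log (m i + α i) - m i * Real.log (m i)) := by
    calc ∑ i, ((kv i + α i) * Real.log (kv i + α i) - kv i * Real.log (kv i))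
        ≤ ∑ i, ((m i + α i) * Real.log (m i + α i) - m i * Real.log (m i) + (kv i - m i) * c) :=
          Finset.sum_le_sum hle
      _ = ∑ i, ((m i + α i) * Real.log (m i + α i) - m i * Real.log (m i)) := by
          rw [Finset.sum_add_distrib, hsum_c, add_zero]
  have hf_rewrite : ∀ v : Fin d → ℝ,
      f v = ∑ i, ((v i + α i) * Real.log (v i + α i) - v i * Real.log (v i))
        - (k + A) * Real.log (k + A) + k * Real.log k + C := by
    intro v
    simp only [f, Finset.sum_sub_distrib]
    ring
  constructor
  · rw [hf_rewrite kv, hf_rewrite m]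
    linarith
  · intro hfe
    by_contra hne
    obtain ⟨j, hj⟩ := Function.ne_iff.mp hne
    have hGlt : ∑ i, ((kv i + α i) * Real.log (kv i + α i) - kv i * Real.log (kv i)) <
        ∑ i, ((m i + α i) * Real.log (m i + α i) - m i * Real.log (m i) + (kv i - m i) * c) := by
      apply Finset.sum_lt_sum hle
      refine ⟨j, Finset.mem_univ j, ?_⟩
      have := tangent_lt (α j) (m j) (kv j) (hα j) (hm_pos j) (hpos j) hj
      rwa [hslope j] at this
    rw [Finset.sum_add_distrib, hsum_c, add_zero] at hGlt
    rw [hf_rewrite kv, hf_rewrite m] at hfe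
    linarith
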